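/- Let G and H be locally compact Hausdorff groupoids with open range and source maps and let Ω be a graph from G to H with anchor maps ρ and σ. Then the map f_Ω: ρ*(G) → H, (ω',γ,ω) ↦ ⟨ω', γω⟩_H (the unique η ∈ H with ω'η = γω), is a strict morphism of topological groupoids extending σ: Ω = ρ*(G)^(0) → H^(0), and the generalised morphisms satisfy [Ω] ∘ Morph(ρ) = Morph(f_Ω) as generalised morphisms from ρ*(G) to H; since Graph(ρ) is an equivalence, every generalised morphism from G to H is the composition of the inverse of an equivalence with (the morphism of) a strict morphism. -/

import Mathlib

/-! ## Topological groupoids, actions, equivalences -/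

universe u v w x y z

/-- A topological groupoid structure on a space `G` of morphisms over a space `O` of objects.
The multiplication is a total function which is only meaningful on composable pairs
(pairs `(γ, γ')` with `s γ = r γ'`). -/
structure TopGroupoid (G : Type u) (O : Type v)
    [TopologicalSpace G] [TopologicalSpace O] where
  r : G → O
  s : G → O
  unit : O → G
  mul : G → G → G
  inv : G → G
  r_unit : ∀ x, r (unit x) = x
  s_unit : ∀ x, s (unit x) = x
  r_mul : ∀ γ γ', s γ = r γ' → r (mul γ γ') = r γ
  s_mul : ∀ γ γ', s γ = r γ' → s (mul γ γ') = s γ'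
  mul_assoc : ∀ γ₁ γ₂ γ₃, s γ₁ = r γ₂ → s γ₂ = r γ₃ →
    mul (mul γ₁ γ₂) γ₃ = mul γ₁ (mul γ₂ γ₃)
  unit_mul : ∀ γ, mul (unit (r γ)) γ = γ
  mul_unit : ∀ γ, mul γ (unit (s γ)) = γ
  r_inv : ∀ γ, r (inv γ) = s γ
  s_inv : ∀ γ, s (inv γ) = r γ
  mul_inv : ∀ γ, mul γ (inv γ) = unit (r γ)
  inv_mul : ∀ γ, mul (inv γ) γ = unit (s γ)
  continuous_r : Continuous r
  continuous_s : Continuous s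
  continuous_unit : Continuous unit
  continuous_inv : Continuous inv
  continuousOn_mul : ContinuousOn (fun p : G × G => mul p.1 p.2) {p | s p.1 = r p.2}

/-- A groupoid "with open range and source maps". -/
def TopGroupoid.OpenMaps {G : Type u} {O : Type v} [TopologicalSpace G] [TopologicalSpace O]
    (𝒢 : TopGroupoid G O) : Prop :=
  IsOpenMap 𝒢.r ∧ IsOpenMap 𝒢.s

/-- A "locally compact Hausdorff groupoid" is a topological groupoid whose total space (and
hence unit space) is locally compact Hausdorff; we record this as a property. -/
def TopGroupoid.IsLCH {G : Type u} {O : Type v} [TopologicalSpace G] [TopologicalSpace O]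
    (_ : TopGroupoid G O) : Prop :=
  LocallyCompactSpace G ∧ T2Space G ∧ LocallyCompactSpace O ∧ T2Space O

/-- A continuous left action of a topological groupoid on a space `Ω` with anchor map `ρ`.
Again the action map is total but only meaningful on composable pairs. -/
structure GLeftAction {G : Type u} {O : Type v} [TopologicalSpace G] [TopologicalSpace O]
    (𝒢 : TopGroupoid G O) (Ω : Type w) [TopologicalSpace Ω] where
  ρ : Ω → O
  act : G → Ω → Ω
  continuous_ρ : Continuous ρ
  ρ_act : ∀ γ ω, 𝒢.s γ = ρ ω → ρ (act γ ω) = 𝒢.r γ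
  unit_act : ∀ ω, act (𝒢.unit (ρ ω)) ω = ω
  mul_act : ∀ γ γ' ω, 𝒢.s γ = 𝒢.r γ' → 𝒢.s γ' = ρ ω →
    act (𝒢.mul γ γ') ω = act γ (act γ' ω)
  continuousOn_act : ContinuousOn (fun p : G × Ω => act p.1 p.2) {p | 𝒢.s p.1 = ρ p.2}

/-- A continuous right action of a topological groupoid on a space `Ω` with anchor map `σ`. -/
structure GRightAction {H : Type u} {P : Type v} [TopologicalSpace H] [TopologicalSpace P]
    (ℋ : TopGroupoid H P) (Ω : Type w) [TopologicalSpace Ω] where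
  σ : Ω → P
  act : Ω → H → Ω
  continuous_σ : Continuous σ
  σ_act : ∀ ω η, σ ω = ℋ.r η → σ (act ω η) = ℋ.s η
  act_unit : ∀ ω, act ω (ℋ.unit (σ ω)) = ω
  act_mul : ∀ ω η η', σ ω = ℋ.r η → ℋ.s η = ℋ.r η' →
    act ω (ℋ.mul η η') = act (act ω η) η'
  continuousOn_act : ContinuousOn (fun p : Ω × H => act p.1 p.2) {p | σ p.1 = ℋ.r p.2}

namespace GLeftAction

variable {G : Type u} {O : Type v} [TopologicalSpace G] [TopologicalSpace O]
variable {𝒢 : TopGroupoid G O} {Ω : Type w} [TopologicalSpace Ω]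

/-- Freeness of a left groupoid action. -/
def Free (a : GLeftAction 𝒢 Ω) : Prop :=
  ∀ γ ω, 𝒢.s γ = a.ρ ω → a.act γ ω = ω → γ = 𝒢.unit (a.ρ ω)

/-- Properness of a left groupoid action: the map `(γ, ω) ↦ (γ·ω, ω)` on the space of
composable pairs is a proper map. -/
def Proper (a : GLeftAction 𝒢 Ω) : Prop :=
  IsProperMap (fun p : {p : G × Ω // 𝒢.s p.1 = a.ρ p.2} =>
    ((a.act p.1.1 p.1.2, p.1.2) : Ω × Ω))

end GLeftAction

namespace GRightAction

variable {H : Type u} {P : Type v} [TopologicalSpace H] [TopologicalSpace P]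
variable {ℋ : TopGroupoid H P} {Ω : Type w} [TopologicalSpace Ω]

/-- Freeness of a right groupoid action. -/
def Free (a : GRightAction ℋ Ω) : Prop :=
  ∀ ω η, a.σ ω = ℋ.r η → a.act ω η = ω → η = ℋ.unit (a.σ ω)

/-- Properness of a right groupoid action. -/
def Proper (a : GRightAction ℋ Ω) : Prop :=
  IsProperMap (fun p : {p : Ω × H // a.σ p.1 = ℋ.r p.2} =>
    ((a.act p.1.1 p.1.2, p.1.1) : Ω × Ω))

end GRightAction

/-- A `𝒢`-`ℋ`-bimodule: commuting continuous left `𝒢`- and right `ℋ`-actions on `Ω`. -/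
structure GBimodule {G : Type u} {O : Type v} {H : Type w} {P : Type x}
    [TopologicalSpace G] [TopologicalSpace O] [TopologicalSpace H] [TopologicalSpace P]
    (𝒢 : TopGroupoid G O) (ℋ : TopGroupoid H P) (Ω : Type y) [TopologicalSpace Ω] where
  left : GLeftAction 𝒢 Ω
  right : GRightAction ℋ Ω
  σ_actl : ∀ γ ω, 𝒢.s γ = left.ρ ω → right.σ (left.act γ ω) = right.σ ω
  ρ_actr : ∀ ω η, right.σ ω = ℋ.r η → left.ρ (right.act ω η) = left.ρ ω
  commute : ∀ γ ω η, 𝒢.s γ = left.ρ ω → right.σ ω = ℋ.r η →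
    left.act γ (right.act ω η) = right.act (left.act γ ω) η

/-- A graph ("generalised morphism datum") from `𝒢` to `ℋ`: a bimodule whose left anchor map
`ρ` is a principal fibration with structure groupoid `ℋ`. -/
structure IsGraph {G : Type u} {O : Type v} {H : Type w} {P : Type x}
    [TopologicalSpace G] [TopologicalSpace O] [TopologicalSpace H] [TopologicalSpace P]
    {𝒢 : TopGroupoid G O} {ℋ : TopGroupoid H P} {Ω : Type y} [TopologicalSpace Ω]
    (M : GBimodule 𝒢 ℋ Ω) : Prop where
  free_right : M.right.Free
  proper_right : M.right.Proper
  ρ_open : IsOpenMap M.left.ρ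
  ρ_surj : Function.Surjective M.left.ρ
  fibre_trans : ∀ ω ω', M.left.ρ ω = M.left.ρ ω' →
    ∃ η, M.right.σ ω = ℋ.r η ∧ M.right.act ω η = ω'

/-- A `𝒢`-`ℋ`-equivalence bimodule. -/
structure IsEquivalence {G : Type u} {O : Type v} {H : Type w} {P : Type x}
    [TopologicalSpace G] [TopologicalSpace O] [TopologicalSpace H] [TopologicalSpace P]
    {𝒢 : TopGroupoid G O} {ℋ : TopGroupoid H P} {Ω : Type y} [TopologicalSpace Ω]
    (M : GBimodule 𝒢 ℋ Ω) : Prop where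
  free_left : M.left.Free
  proper_left : M.left.Proper
  free_right : M.right.Free
  proper_right : M.right.Proper
  ρ_open : IsOpenMap M.left.ρ
  ρ_surj : Function.Surjective M.left.ρ
  /-- the fibres of `ρ` are exactly the `ℋ`-orbits, i.e. `ρ` induces a homeomorphism
  `Ω/ℋ ≅ 𝒢⁽⁰⁾` (openness + surjectivity + this condition). -/
  ρ_fibres : ∀ ω ω', M.left.ρ ω = M.left.ρ ω' ↔
    ∃ η, M.right.σ ω = ℋ.r η ∧ M.right.act ω η = ω'
  σ_open : IsOpenMap M.right.σ
  σ_surj : Function.Surjective M.right.σ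
  /-- the fibres of `σ` are exactly the `𝒢`-orbits, i.e. `σ` induces a homeomorphism
  `𝒢\Ω ≅ ℋ⁽⁰⁾`. -/
  σ_fibres : ∀ ω ω', M.right.σ ω = M.right.σ ω' ↔
    ∃ γ, 𝒢.s γ = M.left.ρ ω ∧ M.left.act γ ω = ω'

/-- A strict morphism of topological groupoids (a continuous functor). -/
structure StrictMorphism {G : Type u} {O : Type v} {H : Type w} {P : Type x}
    [TopologicalSpace G] [TopologicalSpace O] [TopologicalSpace H] [TopologicalSpace P]
    (𝒢 : TopGroupoid G O) (ℋ : TopGroupoid H P) where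
  toFun : G → H
  obj : O → P
  continuous_toFun : Continuous toFun
  continuous_obj : Continuous obj
  map_unit : ∀ x, toFun (𝒢.unit x) = ℋ.unit (obj x)
  map_r : ∀ γ, ℋ.r (toFun γ) = obj (𝒢.r γ)
  map_s : ∀ γ, ℋ.s (toFun γ) = obj (𝒢.s γ)
  map_mul : ∀ γ γ', 𝒢.s γ = 𝒢.r γ' → toFun (𝒢.mul γ γ') = ℋ.mul (toFun γ) (toFun γ')

/-- The carrier of the pullback groupoid `p*(𝒢)` along `p : Y → 𝒢⁽⁰⁾`. -/
def PullbackCarrier {G : Type u} {O : Type v} [TopologicalSpace G] [TopologicalSpace O]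
    (𝒢 : TopGroupoid G O) {Y : Type w} [TopologicalSpace Y] (p : Y → O) : Type (max u w) :=
  {t : Y × G × Y // p t.1 = 𝒢.r t.2.1 ∧ 𝒢.s t.2.1 = p t.2.2}

instance {G : Type u} {O : Type v} [TopologicalSpace G] [TopologicalSpace O]
    (𝒢 : TopGroupoid G O) {Y : Type w} [TopologicalSpace Y] (p : Y → O) :
    TopologicalSpace (PullbackCarrier 𝒢 p) :=
  instTopologicalSpaceSubtype

/-- A topological groupoid structure on `PullbackCarrier 𝒢 p` realises the pullback groupoid
`p*(𝒢)` if its structure maps are the canonical ones. -/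
structure IsPullbackGroupoid {G : Type u} {O : Type v} [TopologicalSpace G] [TopologicalSpace O]
    (𝒢 : TopGroupoid G O) {Y : Type w} [TopologicalSpace Y] (p : Y → O)
    (PB : TopGroupoid (PullbackCarrier 𝒢 p) Y) : Prop where
  r_eq : ∀ t : PullbackCarrier 𝒢 p, PB.r t = t.1.1
  s_eq : ∀ t : PullbackCarrier 𝒢 p, PB.s t = t.1.2.2
  unit_eq : ∀ y : Y, (PB.unit y).1 = (y, 𝒢.unit (p y), y)
  mul_eq : ∀ t t' : PullbackCarrier 𝒢 p, t.1.2.2 = t'.1.1 →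
    (PB.mul t t').1 = (t.1.1, 𝒢.mul t.1.2.1 t'.1.2.1, t'.1.2.2)
  inv_eq : ∀ t : PullbackCarrier 𝒢 p, (PB.inv t).1 = (t.1.2.2, 𝒢.inv t.1.2.1, t.1.1)


/-! ## Auxiliary lemmas -/

open Classical

section Auxiliary

variable {G : Type u} {O : Type v} {H : Type w} {P : Type x} {Ω : Type y}
variable [TopologicalSpace G] [TopologicalSpace O] [TopologicalSpace H] [TopologicalSpace P]
variable [TopologicalSpace Ω]

namespace TopGroupoid

variable (𝒢 : TopGroupoid G O)

lemma mul_inv_cancel_right (γ δ : G) (h : 𝒢.s γ = 𝒢.r δ) :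
    𝒢.mul (𝒢.mul γ δ) (𝒢.inv δ) = γ := by
  rw [𝒢.mul_assoc γ δ (𝒢.inv δ) h (𝒢.r_inv δ).symm, 𝒢.mul_inv δ, ← h, 𝒢.mul_unit]

lemma inv_mul_cancel_left (γ δ : G) (h : 𝒢.s γ = 𝒢.r δ) :
    𝒢.mul (𝒢.inv γ) (𝒢.mul γ δ) = δ := by
  rw [← 𝒢.mul_assoc (𝒢.inv γ) γ δ (𝒢.s_inv γ) h, 𝒢.inv_mul γ, h, 𝒢.unit_mul]

end TopGroupoid

/-- Uniqueness of the element implementing a free right action. -/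
lemma GRightAction.act_injective {ℋ : TopGroupoid H P} (a : GRightAction ℋ Ω)
    (hfree : a.Free) (ω : Ω) (η η' : H) (h1 : a.σ ω = ℋ.r η) (h2 : a.σ ω = ℋ.r η')
    (heq : a.act ω η = a.act ω η') : η = η' := by
  have hs : ℋ.s η = ℋ.s η' := by
    rw [← a.σ_act ω η h1, ← a.σ_act ω η' h2, heq]
  have hc : ℋ.s η' = ℋ.r (ℋ.inv η) := by rw [ℋ.r_inv, hs]
  have key : a.act ω (ℋ.mul η' (ℋ.inv η)) = ω := by
    rw [a.act_mul ω η' (ℋ.inv η) h2 hc, ← heq,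
      ← a.act_mul ω η (ℋ.inv η) h1 (by rw [ℋ.r_inv]), ℋ.mul_inv, ← h1, a.act_unit]
  have hr : a.σ ω = ℋ.r (ℋ.mul η' (ℋ.inv η)) := by
    rw [ℋ.r_mul η' (ℋ.inv η) hc, ← h2]
  have hu := hfree ω (ℋ.mul η' (ℋ.inv η)) hr key
  have e1 : ℋ.mul (ℋ.mul η' (ℋ.inv η)) η = η' := by
    rw [ℋ.mul_assoc η' (ℋ.inv η) η hc (ℋ.s_inv η), ℋ.inv_mul η, hs, ℋ.mul_unit]
  have e2 : ℋ.mul (ℋ.mul η' (ℋ.inv η)) η = η := by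
    rw [hu, h1, ℋ.unit_mul]
  exact e2.symm.trans e1

lemma isProperMap_of_section {X : Type*} {Y : Type*} [TopologicalSpace X] [TopologicalSpace Y]
    {f : X → Y} (hf : Continuous f) {C : Set Y} (hC : IsClosed C)
    (hmem : ∀ x, f x ∈ C) (g : C → X) (hg : Continuous g)
    (hgf : ∀ x, g ⟨f x, hmem x⟩ = x) (hfg : ∀ c : C, f (g c) = (c : Y)) :
    IsProperMap f := by
  rw [isProperMap_iff_isClosedMap_and_compact_fibers]
  refine ⟨hf, ?_, ?_⟩
  · intro K hK
    have himg : f '' K = Subtype.val '' (g ⁻¹' K) := by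
      ext y; constructor
      · rintro ⟨x, hx, rfl⟩
        exact ⟨⟨f x, hmem x⟩, by simpa [hgf x] using hx, rfl⟩
      · rintro ⟨c, hc, rfl⟩
        exact ⟨g c, hc, hfg c⟩
    rw [himg]
    exact hC.isClosedMap_subtype_val _ (hK.preimage hg)
  · intro y
    by_cases hy : y ∈ C
    · have hsub : f ⁻¹' {y} ⊆ {g ⟨y, hy⟩} := by
        intro x hx
        have hxy : f x = y := hx
        have : (⟨f x, hmem x⟩ : C) = ⟨y, hy⟩ := Subtype.ext hxy
        exact (hgf x).symm.trans (congrArg g this)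
      exact ((Set.finite_singleton _).subset hsub).isCompact
    · have : f ⁻¹' {y} = ∅ := by
        ext x; simp only [Set.mem_preimage, Set.mem_singleton_iff, Set.mem_empty_iff_false,
          iff_false]
        exact fun h => hy (h ▸ hmem x)
      rw [this]; exact isCompact_empty

lemma isOpenMap_pullback_fst {A : Type*} {B : Type*} {C : Type*}
    [TopologicalSpace A] [TopologicalSpace B] [TopologicalSpace C]
    {p : A → C} {q : B → C} (hp : Continuous p) (hq : IsOpenMap q) :
    IsOpenMap (fun t : {x : A × B // p x.1 = q x.2} => t.1.1) := by
  intro U hU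
  obtain ⟨T, hT, rfl⟩ := isOpen_induced_iff.mp hU
  rw [isOpen_iff_forall_mem_open]
  rintro a ⟨t, ht, rfl⟩
  obtain ⟨V, W, hV, hW, haV, hbW, hVW⟩ := isOpen_prod_iff.mp hT t.1.1 t.1.2 ht
  refine ⟨V ∩ p ⁻¹' (q '' W), ?_, hV.inter ((hq W hW).preimage hp),
    ⟨haV, ⟨t.1.2, hbW, t.2.symm⟩⟩⟩
  rintro a' ⟨haV', b, hbW', hqb⟩
  exact ⟨⟨(a', b), hqb.symm⟩, hVW ⟨haV', hbW'⟩, rfl⟩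

lemma isOpenMap_pullback_snd {A : Type*} {B : Type*} {C : Type*}
    [TopologicalSpace A] [TopologicalSpace B] [TopologicalSpace C]
    {p : A → C} {q : B → C} (hp : IsOpenMap p) (hq : Continuous q) :
    IsOpenMap (fun t : {x : A × B // p x.1 = q x.2} => t.1.2) := by
  intro U hU
  obtain ⟨T, hT, rfl⟩ := isOpen_induced_iff.mp hU
  rw [isOpen_iff_forall_mem_open]
  rintro b ⟨t, ht, rfl⟩
  obtain ⟨V, W, hV, hW, haV, hbW, hVW⟩ := isOpen_prod_iff.mp hT t.1.1 t.1.2 ht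
  refine ⟨W ∩ q ⁻¹' (p '' V), ?_, hW.inter ((hp V hV).preimage hq),
    ⟨hbW, ⟨t.1.1, haV, t.2⟩⟩⟩
  rintro b' ⟨hbW', a, haV', hpa⟩
  exact ⟨⟨(a, b'), hpa⟩, hVW ⟨haV', hbW'⟩, rfl⟩

namespace IsGraph

variable {𝒢 : TopGroupoid G O} {ℋ : TopGroupoid H P}
variable {M : GBimodule 𝒢 ℋ Ω} (hM : IsGraph M)

/-- The division map of a principal fibration: for a pair `(ω', ω)` in the same `ρ`-fibre,
`div (ω', ω)` is the unique `η` with `ω · η = ω'`. -/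
noncomputable def div (d : {p : Ω × Ω // M.left.ρ p.1 = M.left.ρ p.2}) : H :=
  (hM.fibre_trans d.1.2 d.1.1 d.2.symm).choose

lemma div_r (d : {p : Ω × Ω // M.left.ρ p.1 = M.left.ρ p.2}) :
    M.right.σ d.1.2 = ℋ.r (hM.div d) :=
  (hM.fibre_trans d.1.2 d.1.1 d.2.symm).choose_spec.1

lemma div_act (d : {p : Ω × Ω // M.left.ρ p.1 = M.left.ρ p.2}) :
    M.right.act d.1.2 (hM.div d) = d.1.1 :=
  (hM.fibre_trans d.1.2 d.1.1 d.2.symm).choose_spec.2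

lemma div_unique (d : {p : Ω × Ω // M.left.ρ p.1 = M.left.ρ p.2}) (η : H)
    (h1 : M.right.σ d.1.2 = ℋ.r η) (h2 : M.right.act d.1.2 η = d.1.1) :
    hM.div d = η :=
  M.right.act_injective hM.free_right d.1.2 _ η (hM.div_r d) h1
    ((hM.div_act d).trans h2.symm)

lemma continuous_div : Continuous hM.div := by
  set g : {p : Ω × Ω // M.left.ρ p.1 = M.left.ρ p.2} →
      {p : Ω × H // M.right.σ p.1 = ℋ.r p.2} :=
    fun d => ⟨(d.1.2, hM.div d), hM.div_r d⟩ with hg_def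
  have hF := hM.proper_right
  have hg : Continuous g := by
    rw [continuous_iff_isClosed]
    intro C hC
    have : g ⁻¹' C = Subtype.val ⁻¹'
        ((fun p : {p : Ω × H // M.right.σ p.1 = ℋ.r p.2} =>
          ((M.right.act p.1.1 p.1.2, p.1.1) : Ω × Ω)) '' C) := by
      ext d; constructor
      · intro hd
        exact ⟨g d, hd, by simp only [hg_def]; exact Prod.ext (hM.div_act d) rfl⟩
      · rintro ⟨p, hp, heq⟩
        have h1 : M.right.act p.1.1 p.1.2 = d.1.1 := congrArg Prod.fst heq
        have h2 : p.1.1 = d.1.2 := congrArg Prod.snd heq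
        have : g d = p := by
          apply Subtype.ext
          apply Prod.ext h2.symm
          exact (hM.div_unique d p.1.2 (h2 ▸ p.2) (h2 ▸ h1)).symm ▸ rfl
        rwa [Set.mem_preimage, this]
    rw [this]
    exact (hF.isClosedMap C hC).preimage continuous_subtype_val
  have : hM.div = fun d => ((g d : Ω × H)).2 := rfl
  rw [this]
  exact continuous_snd.comp (continuous_subtype_val.comp hg)

end IsGraph

namespace IsGraph

variable {𝒢 : TopGroupoid G O} {ℋ : TopGroupoid H P}
variable {M : GBimodule 𝒢 ℋ Ω} (hM : IsGraph M)

/-- The pair fed to `div` when computing `f_Ω`. -/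
def fd (t : PullbackCarrier 𝒢 M.left.ρ) : {p : Ω × Ω // M.left.ρ p.1 = M.left.ρ p.2} :=
  ⟨(M.left.act t.1.2.1 t.1.2.2, t.1.1), by rw [M.left.ρ_act _ _ t.2.2, t.2.1]⟩

/-- The strict morphism `f_Ω : ρ*(𝒢) → ℋ` on arrows. -/
noncomputable def fmap (t : PullbackCarrier 𝒢 M.left.ρ) : H :=
  hM.div (fd t)

lemma fmap_sigma_r (t : PullbackCarrier 𝒢 M.left.ρ) :
    M.right.σ t.1.1 = ℋ.r (hM.fmap t) := hM.div_r (fd t)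

lemma fmap_r (t : PullbackCarrier 𝒢 M.left.ρ) :
    ℋ.r (hM.fmap t) = M.right.σ t.1.1 := (hM.div_r (fd t)).symm

lemma fmap_act (t : PullbackCarrier 𝒢 M.left.ρ) :
    M.right.act t.1.1 (hM.fmap t) = M.left.act t.1.2.1 t.1.2.2 := hM.div_act (fd t)

lemma fmap_unique (t : PullbackCarrier 𝒢 M.left.ρ) (η : H)
    (h1 : M.right.σ t.1.1 = ℋ.r η)
    (h2 : M.right.act t.1.1 η = M.left.act t.1.2.1 t.1.2.2) : hM.fmap t = η :=
  hM.div_unique (fd t) η h1 h2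

lemma fmap_s (t : PullbackCarrier 𝒢 M.left.ρ) :
    ℋ.s (hM.fmap t) = M.right.σ t.1.2.2 := by
  rw [← M.right.σ_act t.1.1 _ (hM.fmap_sigma_r t), hM.fmap_act t, M.σ_actl _ _ t.2.2]

lemma continuous_fmap : Continuous hM.fmap := by
  have c1 : Continuous fun t : PullbackCarrier 𝒢 M.left.ρ => (t.1.2.1, t.1.2.2) :=
    ((continuous_fst.comp (continuous_snd.comp continuous_subtype_val)).prodMk
      (continuous_snd.comp (continuous_snd.comp continuous_subtype_val)))
  have hact : Continuous fun t : PullbackCarrier 𝒢 M.left.ρ =>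
      M.left.act t.1.2.1 t.1.2.2 :=
    M.left.continuousOn_act.comp_continuous c1 fun t => t.2.2
  have c2 : Continuous fun t : PullbackCarrier 𝒢 M.left.ρ =>
      ((M.left.act t.1.2.1 t.1.2.2, t.1.1) : Ω × Ω) :=
    hact.prodMk (continuous_fst.comp continuous_subtype_val)
  have : hM.fmap = hM.div ∘ fun t => fd (M := M) t := rfl
  rw [this]
  exact hM.continuous_div.comp (c2.subtype_mk _)

/-- `f_Ω` as a strict morphism. -/
noncomputable def fOmega (PB : TopGroupoid (PullbackCarrier 𝒢 M.left.ρ) Ω)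
    (hPB : IsPullbackGroupoid 𝒢 M.left.ρ PB) : StrictMorphism PB ℋ where
  toFun := hM.fmap
  obj := M.right.σ
  continuous_toFun := hM.continuous_fmap
  continuous_obj := M.right.continuous_σ
  map_unit x := by
    have h := hPB.unit_eq x
    apply hM.fmap_unique
    · rw [h]
      show M.right.σ x = ℋ.r (ℋ.unit (M.right.σ x))
      rw [ℋ.r_unit]
    · rw [h]
      show M.right.act x (ℋ.unit (M.right.σ x)) = M.left.act (𝒢.unit (M.left.ρ x)) x
      rw [M.right.act_unit x, M.left.unit_act x]
  map_r t := (hM.fmap_r t).trans (congrArg M.right.σ (hPB.r_eq t)).symm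
  map_s t := (hM.fmap_s t).trans (congrArg M.right.σ (hPB.s_eq t)).symm
  map_mul t t' h := by
    have hcomp : t.1.2.2 = t'.1.1 := by rw [← hPB.s_eq t, ← hPB.r_eq t', h]
    have hff : ℋ.s (hM.fmap t) = ℋ.r (hM.fmap t') := by
      rw [hM.fmap_s, hM.fmap_r, hcomp]
    have hγγ : 𝒢.s t.1.2.1 = 𝒢.r t'.1.2.1 := by rw [t.2.2, hcomp, t'.2.1]
    have hsγρ : 𝒢.s t.1.2.1 = M.left.ρ t'.1.1 := by rw [t.2.2, hcomp]
    have hmul := hPB.mul_eq t t' hcomp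
    apply hM.fmap_unique
    · rw [hmul]
      exact (hM.fmap_sigma_r t).trans (ℋ.r_mul _ _ hff).symm
    · rw [hmul]
      show M.right.act t.1.1 (ℋ.mul (hM.fmap t) (hM.fmap t'))
          = M.left.act (𝒢.mul t.1.2.1 t'.1.2.1) t'.1.2.2
      rw [M.right.act_mul t.1.1 _ _ (hM.fmap_sigma_r t) hff, hM.fmap_act t, hcomp,
        ← M.commute t.1.2.1 t'.1.1 (hM.fmap t') hsγρ (hM.fmap_sigma_r t'),
        hM.fmap_act t', ← M.left.mul_act t.1.2.1 t'.1.2.1 t'.1.2.2 hγγ t'.2.2]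

/-- The bimodule `Graph(ρ)` from `ρ*(𝒢)` to `𝒢`. -/
noncomputable def MTheta (M : GBimodule 𝒢 ℋ Ω) (PB : TopGroupoid (PullbackCarrier 𝒢 M.left.ρ) Ω)
    (hPB : IsPullbackGroupoid 𝒢 M.left.ρ PB) :
    GBimodule PB 𝒢 {q : Ω × G // M.left.ρ q.1 = 𝒢.r q.2} where
  left :=
  { ρ := fun q => q.1.1
    act := fun t q =>
      if h : t.1.2.2 = q.1.1 then
        ⟨(t.1.1, 𝒢.mul t.1.2.1 q.1.2),
          by rw [𝒢.r_mul _ _ (by rw [t.2.2, h, q.2]), t.2.1]⟩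
      else q
    continuous_ρ := continuous_fst.comp continuous_subtype_val
    ρ_act := fun t q h => by
      have h' : t.1.2.2 = q.1.1 := (hPB.s_eq t).symm.trans h
      rw [dif_pos h']
      exact (hPB.r_eq t).symm
    unit_act := fun q => by
      have hu := hPB.unit_eq q.1.1
      have h' : (PB.unit q.1.1).1.2.2 = q.1.1 := by rw [hu]
      rw [dif_pos h']
      apply Subtype.ext
      show (((PB.unit q.1.1).1.1, 𝒢.mul (PB.unit q.1.1).1.2.1 q.1.2) : Ω × G) = q.1
      rw [hu]
      refine Prod.ext rfl ?_
      show 𝒢.mul (𝒢.unit (M.left.ρ q.1.1)) q.1.2 = q.1.2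
      rw [q.2, 𝒢.unit_mul]
    mul_act := fun t t' q h1 h2 => by
      have hc1 : t.1.2.2 = t'.1.1 := by rw [← hPB.s_eq t, ← hPB.r_eq t', h1]
      have hc2 : t'.1.2.2 = q.1.1 := (hPB.s_eq t').symm.trans h2
      have hmul := hPB.mul_eq t t' hc1
      have hcm : (PB.mul t t').1.2.2 = q.1.1 := by rw [hmul]; exact hc2
      rw [dif_pos hcm, dif_pos hc2]
      rw [dif_pos (show t.1.2.2 = t'.1.1 from hc1)]
      apply Subtype.ext
      show (((PB.mul t t').1.1, 𝒢.mul (PB.mul t t').1.2.1 q.1.2) : Ω × G)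
        = (t.1.1, 𝒢.mul t.1.2.1 (𝒢.mul t'.1.2.1 q.1.2))
      rw [hmul]
      refine Prod.ext rfl ?_
      exact 𝒢.mul_assoc t.1.2.1 t'.1.2.1 q.1.2 (by rw [t.2.2, hc1, t'.2.1])
        (by rw [t'.2.2, hc2, q.2])
    continuousOn_act := by
      rw [(Topology.IsInducing.mk rfl : Topology.IsInducing (Subtype.val : {q : Ω × G // M.left.ρ q.1 = 𝒢.r q.2} → Ω × G)).continuousOn_iff]
      have hc : ContinuousOn
          (fun p : PullbackCarrier 𝒢 M.left.ρ × {q : Ω × G // M.left.ρ q.1 = 𝒢.r q.2} =>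
            ((p.1.1.1, 𝒢.mul p.1.1.2.1 p.2.1.2) : Ω × G))
          {p | PB.s p.1 = p.2.1.1} := by
        refine ContinuousOn.prodMk
          (continuous_fst.comp (continuous_subtype_val.comp continuous_fst)).continuousOn ?_
        refine ContinuousOn.congr (𝒢.continuousOn_mul.comp
          (Continuous.continuousOn ((continuous_fst.comp (continuous_snd.comp
            (continuous_subtype_val.comp continuous_fst))).prodMk
            (continuous_snd.comp (continuous_subtype_val.comp continuous_snd)))) ?_)
          (fun p _ => rfl)
        intro p hp
        have h' : p.1.1.2.2 = p.2.1.1 := (hPB.s_eq p.1).symm.trans hp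
        show 𝒢.s p.1.1.2.1 = 𝒢.r p.2.1.2
        rw [p.1.2.2, h', p.2.2]
      refine hc.congr ?_
      intro p hp
      have h' : p.1.1.2.2 = p.2.1.1 := (hPB.s_eq p.1).symm.trans hp
      simp only [Function.comp_apply, dif_pos h'] }
  right :=
  { σ := fun q => 𝒢.s q.1.2
    act := fun q γ =>
      if h : 𝒢.s q.1.2 = 𝒢.r γ then
        ⟨(q.1.1, 𝒢.mul q.1.2 γ), by rw [𝒢.r_mul _ _ h]; exact q.2⟩
      else q
    continuous_σ := 𝒢.continuous_s.comp (continuous_snd.comp continuous_subtype_val)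
    σ_act := fun q γ h => by
      rw [dif_pos h]
      exact 𝒢.s_mul _ _ h
    act_unit := fun q => by
      rw [dif_pos (𝒢.r_unit (𝒢.s q.1.2)).symm]
      exact Subtype.ext (Prod.ext rfl (𝒢.mul_unit q.1.2))
    act_mul := fun q γ γ' h1 h2 => by
      have hr : 𝒢.s q.1.2 = 𝒢.r (𝒢.mul γ γ') := by rw [𝒢.r_mul _ _ h2]; exact h1
      have h1' : 𝒢.s (𝒢.mul q.1.2 γ) = 𝒢.r γ' := by rw [𝒢.s_mul _ _ h1]; exact h2
      rw [dif_pos hr, dif_pos h1]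
      rw [dif_pos (show 𝒢.s (𝒢.mul q.1.2 γ) = 𝒢.r γ' from h1')]
      exact Subtype.ext (Prod.ext rfl (𝒢.mul_assoc q.1.2 γ γ' h1 h2).symm)
    continuousOn_act := by
      rw [(Topology.IsInducing.mk rfl : Topology.IsInducing (Subtype.val : {q : Ω × G // M.left.ρ q.1 = 𝒢.r q.2} → Ω × G)).continuousOn_iff]
      have hc : ContinuousOn
          (fun p : {q : Ω × G // M.left.ρ q.1 = 𝒢.r q.2} × G =>
            ((p.1.1.1, 𝒢.mul p.1.1.2 p.2) : Ω × G))
          {p | 𝒢.s p.1.1.2 = 𝒢.r p.2} := by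
        refine ContinuousOn.prodMk
          (continuous_fst.comp (continuous_subtype_val.comp continuous_fst)).continuousOn ?_
        exact ContinuousOn.congr (𝒢.continuousOn_mul.comp
          (Continuous.continuousOn ((continuous_snd.comp
            (continuous_subtype_val.comp continuous_fst)).prodMk continuous_snd))
          (fun p hp => hp)) (fun p _ => rfl)
      refine hc.congr ?_
      intro p hp
      simp only [Function.comp_apply, dif_pos (show 𝒢.s p.1.1.2 = 𝒢.r p.2 from hp)] }
  σ_actl := fun t q h => by
    have h' : t.1.2.2 = q.1.1 := (hPB.s_eq t).symm.trans h
    dsimp only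
    rw [dif_pos h']
    exact 𝒢.s_mul _ _ (by rw [t.2.2, h', q.2])
  ρ_actr := fun q γ h => by
    dsimp only at h ⊢
    rw [dif_pos h]
  commute := fun t q γ h1 h2 => by
    dsimp only at h1 h2 ⊢
    rw [dif_pos h2]
    have h1' : t.1.2.2 = q.1.1 := (hPB.s_eq t).symm.trans h1
    rw [dif_pos (show t.1.2.2 = q.1.1 from h1'), dif_pos h1']
    have hsγ : 𝒢.s (𝒢.mul t.1.2.1 q.1.2) = 𝒢.r γ := by rw [𝒢.s_mul _ _ (by rw [t.2.2, h1', q.2])]; exact h2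
    rw [dif_pos hsγ]
    refine Subtype.ext (Prod.ext rfl ?_)
    exact (𝒢.mul_assoc t.1.2.1 q.1.2 γ (by rw [t.2.2, h1', q.2]) h2).symm

/-- The bimodule `Graph(f_Ω)` from `ρ*(𝒢)` to `ℋ`. -/
noncomputable def MGraphF (PB : TopGroupoid (PullbackCarrier 𝒢 M.left.ρ) Ω)
    (hPB : IsPullbackGroupoid 𝒢 M.left.ρ PB) :
    GBimodule PB ℋ {q : Ω × H // M.right.σ q.1 = ℋ.r q.2} where
  left :=
  { ρ := fun q => q.1.1
    act := fun t q =>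
      if h : t.1.2.2 = q.1.1 then
        ⟨(t.1.1, ℋ.mul (hM.fmap t) q.1.2),
          by rw [ℋ.r_mul _ _ (by rw [hM.fmap_s t, h, q.2])]; exact hM.fmap_sigma_r t⟩
      else q
    continuous_ρ := continuous_fst.comp continuous_subtype_val
    ρ_act := fun t q h => by
      have h' : t.1.2.2 = q.1.1 := (hPB.s_eq t).symm.trans h
      rw [dif_pos h']
      exact (hPB.r_eq t).symm
    unit_act := fun q => by
      have hu := hPB.unit_eq q.1.1
      have h' : (PB.unit q.1.1).1.2.2 = q.1.1 := by rw [hu]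
      rw [dif_pos h']
      apply Subtype.ext
      show (((PB.unit q.1.1).1.1, ℋ.mul (hM.fmap (PB.unit q.1.1)) q.1.2) : Ω × H) = q.1
      have hf : hM.fmap (PB.unit q.1.1) = ℋ.unit (M.right.σ q.1.1) :=
        (hM.fOmega PB hPB).map_unit q.1.1
      rw [hf, hu]
      refine Prod.ext rfl ?_
      show ℋ.mul (ℋ.unit (M.right.σ q.1.1)) q.1.2 = q.1.2
      rw [q.2, ℋ.unit_mul]
    mul_act := fun t t' q h1 h2 => by
      have hc1 : t.1.2.2 = t'.1.1 := by rw [← hPB.s_eq t, ← hPB.r_eq t', h1]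
      have hc2 : t'.1.2.2 = q.1.1 := (hPB.s_eq t').symm.trans h2
      have hmul := hPB.mul_eq t t' hc1
      have hcm : (PB.mul t t').1.2.2 = q.1.1 := by rw [hmul]; exact hc2
      rw [dif_pos hcm, dif_pos hc2]
      rw [dif_pos (show t.1.2.2 = t'.1.1 from hc1)]
      apply Subtype.ext
      show (((PB.mul t t').1.1, ℋ.mul (hM.fmap (PB.mul t t')) q.1.2) : Ω × H)
        = (t.1.1, ℋ.mul (hM.fmap t) (ℋ.mul (hM.fmap t') q.1.2))
      have hf : hM.fmap (PB.mul t t') = ℋ.mul (hM.fmap t) (hM.fmap t') :=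
        (hM.fOmega PB hPB).map_mul t t' h1
      have hff : ℋ.s (hM.fmap t) = ℋ.r (hM.fmap t') := by
        rw [hM.fmap_s, hM.fmap_r, hc1]
      rw [hf, hmul]
      refine Prod.ext rfl ?_
      exact ℋ.mul_assoc (hM.fmap t) (hM.fmap t') q.1.2 hff
        (by rw [hM.fmap_s, hc2, q.2])
    continuousOn_act := by
      rw [(Topology.IsInducing.mk rfl : Topology.IsInducing (Subtype.val : {q : Ω × H // M.right.σ q.1 = ℋ.r q.2} → Ω × H)).continuousOn_iff]
      have hc : ContinuousOn
          (fun p : PullbackCarrier 𝒢 M.left.ρ × {q : Ω × H // M.right.σ q.1 = ℋ.r q.2} =>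
            ((p.1.1.1, ℋ.mul (hM.fmap p.1) p.2.1.2) : Ω × H))
          {p | PB.s p.1 = p.2.1.1} := by
        refine ContinuousOn.prodMk
          (continuous_fst.comp (continuous_subtype_val.comp continuous_fst)).continuousOn ?_
        refine ContinuousOn.congr (ℋ.continuousOn_mul.comp
          (Continuous.continuousOn ((hM.continuous_fmap.comp continuous_fst).prodMk
            (continuous_snd.comp (continuous_subtype_val.comp continuous_snd)))) ?_)
          (fun p _ => rfl)
        intro p hp
        have h' : p.1.1.2.2 = p.2.1.1 := (hPB.s_eq p.1).symm.trans hp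
        show ℋ.s (hM.fmap p.1) = ℋ.r p.2.1.2
        rw [hM.fmap_s, h', p.2.2]
      refine hc.congr ?_
      intro p hp
      have h' : p.1.1.2.2 = p.2.1.1 := (hPB.s_eq p.1).symm.trans hp
      simp only [Function.comp_apply, dif_pos h'] }
  right :=
  { σ := fun q => ℋ.s q.1.2
    act := fun q η =>
      if h : ℋ.s q.1.2 = ℋ.r η then
        ⟨(q.1.1, ℋ.mul q.1.2 η), by rw [ℋ.r_mul _ _ h]; exact q.2⟩
      else q
    continuous_σ := ℋ.continuous_s.comp (continuous_snd.comp continuous_subtype_val)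
    σ_act := fun q η h => by
      rw [dif_pos h]
      exact ℋ.s_mul _ _ h
    act_unit := fun q => by
      rw [dif_pos (ℋ.r_unit (ℋ.s q.1.2)).symm]
      exact Subtype.ext (Prod.ext rfl (ℋ.mul_unit q.1.2))
    act_mul := fun q η η' h1 h2 => by
      have hr : ℋ.s q.1.2 = ℋ.r (ℋ.mul η η') := by rw [ℋ.r_mul _ _ h2]; exact h1
      have h1' : ℋ.s (ℋ.mul q.1.2 η) = ℋ.r η' := by rw [ℋ.s_mul _ _ h1]; exact h2
      rw [dif_pos hr, dif_pos h1]
      rw [dif_pos (show ℋ.s (ℋ.mul q.1.2 η) = ℋ.r η' from h1')]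
      exact Subtype.ext (Prod.ext rfl (ℋ.mul_assoc q.1.2 η η' h1 h2).symm)
    continuousOn_act := by
      rw [(Topology.IsInducing.mk rfl : Topology.IsInducing (Subtype.val : {q : Ω × H // M.right.σ q.1 = ℋ.r q.2} → Ω × H)).continuousOn_iff]
      have hc : ContinuousOn
          (fun p : {q : Ω × H // M.right.σ q.1 = ℋ.r q.2} × H =>
            ((p.1.1.1, ℋ.mul p.1.1.2 p.2) : Ω × H))
          {p | ℋ.s p.1.1.2 = ℋ.r p.2} := by
        refine ContinuousOn.prodMk
          (continuous_fst.comp (continuous_subtype_val.comp continuous_fst)).continuousOn ?_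
        exact ContinuousOn.congr (ℋ.continuousOn_mul.comp
          (Continuous.continuousOn ((continuous_snd.comp
            (continuous_subtype_val.comp continuous_fst)).prodMk continuous_snd))
          (fun p hp => hp)) (fun p _ => rfl)
      refine hc.congr ?_
      intro p hp
      simp only [Function.comp_apply, dif_pos (show ℋ.s p.1.1.2 = ℋ.r p.2 from hp)] }
  σ_actl := fun t q h => by
    have h' : t.1.2.2 = q.1.1 := (hPB.s_eq t).symm.trans h
    dsimp only
    rw [dif_pos h']
    exact ℋ.s_mul _ _ (by rw [hM.fmap_s, h', q.2])
  ρ_actr := fun q η h => by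
    dsimp only at h ⊢
    rw [dif_pos h]
  commute := fun t q η h1 h2 => by
    dsimp only at h1 h2 ⊢
    rw [dif_pos h2]
    have h1' : t.1.2.2 = q.1.1 := (hPB.s_eq t).symm.trans h1
    rw [dif_pos (show t.1.2.2 = q.1.1 from h1'), dif_pos h1']
    have hsη : ℋ.s (ℋ.mul (hM.fmap t) q.1.2) = ℋ.r η := by
      rw [ℋ.s_mul _ _ (by rw [hM.fmap_s, h1', q.2])]; exact h2
    rw [dif_pos hsη]
    refine Subtype.ext (Prod.ext rfl ?_)
    exact (ℋ.mul_assoc (hM.fmap t) q.1.2 η (by rw [hM.fmap_s, h1', q.2]) h2).symm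

section Acc

variable (PB : TopGroupoid (PullbackCarrier 𝒢 M.left.ρ) Ω)
    (hPB : IsPullbackGroupoid 𝒢 M.left.ρ PB)

lemma MTheta_left_act (t : PullbackCarrier 𝒢 M.left.ρ) (q : {q : Ω × G // M.left.ρ q.1 = 𝒢.r q.2})
    (h : t.1.2.2 = q.1.1) :
    ((MTheta M PB hPB).left.act t q).1 = (t.1.1, 𝒢.mul t.1.2.1 q.1.2) :=
  congrArg Subtype.val (dif_pos h)

lemma MTheta_right_act (q : {q : Ω × G // M.left.ρ q.1 = 𝒢.r q.2}) (γ : G)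
    (h : 𝒢.s q.1.2 = 𝒢.r γ) :
    ((MTheta M PB hPB).right.act q γ).1 = (q.1.1, 𝒢.mul q.1.2 γ) :=
  congrArg Subtype.val (dif_pos h)

lemma MGraphF_left_act (t : PullbackCarrier 𝒢 M.left.ρ)
    (q : {q : Ω × H // M.right.σ q.1 = ℋ.r q.2}) (h : t.1.2.2 = q.1.1) :
    ((hM.MGraphF PB hPB).left.act t q).1 = (t.1.1, ℋ.mul (hM.fmap t) q.1.2) :=
  congrArg Subtype.val (dif_pos h)

lemma MGraphF_right_act (q : {q : Ω × H // M.right.σ q.1 = ℋ.r q.2}) (η : H)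
    (h : ℋ.s q.1.2 = ℋ.r η) :
    ((hM.MGraphF PB hPB).right.act q η).1 = (q.1.1, ℋ.mul q.1.2 η) :=
  congrArg Subtype.val (dif_pos h)

include hM in
lemma isEquivalence_MTheta [T2Space O] [T2Space Ω] (h𝒢 : 𝒢.OpenMaps) :
    IsEquivalence (MTheta M PB hPB) where
  free_left := by
    intro t q h heq
    have h' : t.1.2.2 = q.1.1 := (hPB.s_eq t).symm.trans h
    have hval : ((t.1.1, 𝒢.mul t.1.2.1 q.1.2) : Ω × G) = q.1 :=
      (MTheta_left_act (M := M) PB hPB t q h').symm.trans (congrArg Subtype.val heq)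
    have h1 : t.1.1 = q.1.1 := congrArg Prod.fst hval
    have h2 : 𝒢.mul t.1.2.1 q.1.2 = q.1.2 := congrArg Prod.snd hval
    have hsr : 𝒢.s t.1.2.1 = 𝒢.r q.1.2 := by rw [t.2.2, h', q.2]
    have hγ : t.1.2.1 = 𝒢.unit (M.left.ρ q.1.1) := by
      have hh := 𝒢.mul_inv_cancel_right t.1.2.1 q.1.2 hsr
      rw [h2, 𝒢.mul_inv, ← q.2] at hh
      exact hh.symm
    show t = PB.unit q.1.1
    apply Subtype.ext
    rw [hPB.unit_eq q.1.1]
    exact Prod.ext h1 (Prod.ext hγ h')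
  proper_left := by
    refine isProperMap_of_section
      (C := {z : {q : Ω × G // M.left.ρ q.1 = 𝒢.r q.2} ×
          {q : Ω × G // M.left.ρ q.1 = 𝒢.r q.2} | 𝒢.s z.1.1.2 = 𝒢.s z.2.1.2})
      ?_ ?_ ?_
      (fun z => ⟨(⟨(z.1.1.1.1, 𝒢.mul z.1.1.1.2 (𝒢.inv z.1.2.1.2), z.1.2.1.1),
        by rw [𝒢.r_mul _ _ (by rw [𝒢.r_inv]; exact z.2)]; exact z.1.1.2,
        by rw [𝒢.s_mul _ _ (by rw [𝒢.r_inv]; exact z.2), 𝒢.s_inv]; exact z.1.2.2.symm⟩,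
        z.1.2), hPB.s_eq _⟩) ?_ ?_ ?_
    · refine Continuous.prodMk ?_ (continuous_snd.comp continuous_subtype_val)
      exact (MTheta M PB hPB).left.continuousOn_act.comp_continuous
        continuous_subtype_val (fun p => p.2)
    · exact isClosed_eq
        (𝒢.continuous_s.comp (continuous_snd.comp
          (continuous_subtype_val.comp continuous_fst)))
        (𝒢.continuous_s.comp (continuous_snd.comp
          (continuous_subtype_val.comp continuous_snd)))
    · exact fun p => (MTheta M PB hPB).σ_actl p.1.1 p.1.2 p.2
    · refine Continuous.subtype_mk ?_ _
      refine Continuous.prodMk ?_ (continuous_snd.comp continuous_subtype_val)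
      refine Continuous.subtype_mk ?_ _
      refine Continuous.prodMk (continuous_fst.comp (continuous_subtype_val.comp
        (continuous_fst.comp continuous_subtype_val))) ?_
      refine Continuous.prodMk ?_ (continuous_fst.comp (continuous_subtype_val.comp
        (continuous_snd.comp continuous_subtype_val)))
      exact 𝒢.continuousOn_mul.comp_continuous
        ((continuous_snd.comp (continuous_subtype_val.comp
          (continuous_fst.comp continuous_subtype_val))).prodMk
          (𝒢.continuous_inv.comp (continuous_snd.comp (continuous_subtype_val.comp
            (continuous_snd.comp continuous_subtype_val)))))
        (fun z => by
          show 𝒢.s z.1.1.1.2 = 𝒢.r (𝒢.inv z.1.2.1.2)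
          rw [𝒢.r_inv]; exact z.2)
    · intro p
      have h' : p.1.1.1.2.2 = p.1.2.1.1 := (hPB.s_eq p.1.1).symm.trans p.2
      have hv := MTheta_left_act (M := M) PB hPB p.1.1 p.1.2 h'
      apply Subtype.ext
      refine Prod.ext ?_ rfl
      apply Subtype.ext
      show (((MTheta M PB hPB).left.act p.1.1 p.1.2).1.1,
        𝒢.mul ((MTheta M PB hPB).left.act p.1.1 p.1.2).1.2 (𝒢.inv p.1.2.1.2), p.1.2.1.1)
        = p.1.1.1
      rw [hv]
      refine Prod.ext rfl (Prod.ext ?_ h'.symm)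
      show 𝒢.mul (𝒢.mul p.1.1.1.2.1 p.1.2.1.2) (𝒢.inv p.1.2.1.2) = p.1.1.1.2.1
      exact 𝒢.mul_inv_cancel_right _ _ (by rw [p.1.1.2.2, h', p.1.2.2])
    · intro z
      refine Prod.ext ?_ rfl
      apply Subtype.ext
      rw [MTheta_left_act (M := M) PB hPB _ _ rfl]
      refine Prod.ext rfl ?_
      show 𝒢.mul (𝒢.mul z.1.1.1.2 (𝒢.inv z.1.2.1.2)) z.1.2.1.2 = z.1.1.1.2
      rw [𝒢.mul_assoc _ _ _ (by rw [𝒢.r_inv]; exact z.2) (𝒢.s_inv _), 𝒢.inv_mul,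
        ← z.2, 𝒢.mul_unit]
  free_right := by
    intro q γ h heq
    have h' : 𝒢.s q.1.2 = 𝒢.r γ := h
    have hval : ((q.1.1, 𝒢.mul q.1.2 γ) : Ω × G) = q.1 :=
      (MTheta_right_act (M := M) PB hPB q γ h').symm.trans (congrArg Subtype.val heq)
    have h2 : 𝒢.mul q.1.2 γ = q.1.2 := congrArg Prod.snd hval
    have hh := 𝒢.inv_mul_cancel_left q.1.2 γ h'
    rw [h2, 𝒢.inv_mul] at hh
    exact hh.symm
  proper_right := by
    refine isProperMap_of_section
      (C := {z : {q : Ω × G // M.left.ρ q.1 = 𝒢.r q.2} ×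
          {q : Ω × G // M.left.ρ q.1 = 𝒢.r q.2} | z.1.1.1 = z.2.1.1})
      ?_ ?_ ?_
      (fun z => ⟨(z.1.2, 𝒢.mul (𝒢.inv z.1.2.1.2) z.1.1.1.2), by
        show 𝒢.s z.1.2.1.2 = 𝒢.r (𝒢.mul (𝒢.inv z.1.2.1.2) z.1.1.1.2)
        rw [𝒢.r_mul _ _ (by rw [𝒢.s_inv, ← z.1.2.2, ← z.1.1.2, z.2]), 𝒢.r_inv]⟩) ?_ ?_ ?_
    · refine Continuous.prodMk ?_ (continuous_fst.comp continuous_subtype_val)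
      exact (MTheta M PB hPB).right.continuousOn_act.comp_continuous
        continuous_subtype_val (fun p => p.2)
    · exact isClosed_eq
        (continuous_fst.comp (continuous_subtype_val.comp continuous_fst))
        (continuous_fst.comp (continuous_subtype_val.comp continuous_snd))
    · exact fun p => (MTheta M PB hPB).ρ_actr p.1.1 p.1.2 p.2
    · refine Continuous.subtype_mk ?_ _
      refine Continuous.prodMk (continuous_snd.comp continuous_subtype_val) ?_
      exact 𝒢.continuousOn_mul.comp_continuous
        ((𝒢.continuous_inv.comp (continuous_snd.comp (continuous_subtype_val.comp
          (continuous_snd.comp continuous_subtype_val)))).prodMk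
          (continuous_snd.comp (continuous_subtype_val.comp
            (continuous_fst.comp continuous_subtype_val))))
        (fun z => by
          show 𝒢.s (𝒢.inv z.1.2.1.2) = 𝒢.r z.1.1.1.2
          rw [𝒢.s_inv, ← z.1.2.2, ← z.1.1.2, z.2])
    · intro p
      have hv := MTheta_right_act (M := M) PB hPB p.1.1 p.1.2 p.2
      apply Subtype.ext
      refine Prod.ext rfl ?_
      show 𝒢.mul (𝒢.inv p.1.1.1.2) (((MTheta M PB hPB).right.act p.1.1 p.1.2).1.2) = p.1.2
      rw [hv]
      exact 𝒢.inv_mul_cancel_left _ _ p.2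
    · intro z
      have hcc : 𝒢.s (𝒢.inv z.1.2.1.2) = 𝒢.r z.1.1.1.2 := by
        rw [𝒢.s_inv, ← z.1.2.2, ← z.1.1.2, z.2]
      have hrr : 𝒢.r z.1.2.1.2 = 𝒢.r z.1.1.1.2 := by
        rw [← z.1.2.2, ← z.1.1.2, z.2]
      refine Prod.ext ?_ rfl
      apply Subtype.ext
      rw [MTheta_right_act (M := M) PB hPB _ _ (by
        show 𝒢.s z.1.2.1.2 = 𝒢.r (𝒢.mul (𝒢.inv z.1.2.1.2) z.1.1.1.2)
        rw [𝒢.r_mul _ _ hcc, 𝒢.r_inv])]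
      refine Prod.ext z.2.symm ?_
      show 𝒢.mul z.1.2.1.2 (𝒢.mul (𝒢.inv z.1.2.1.2) z.1.1.1.2) = z.1.1.1.2
      rw [← 𝒢.mul_assoc _ _ _ (𝒢.r_inv _).symm hcc, 𝒢.mul_inv, hrr, 𝒢.unit_mul]
  ρ_open := isOpenMap_pullback_fst M.left.continuous_ρ h𝒢.1
  ρ_surj := fun ω => ⟨⟨(ω, 𝒢.unit (M.left.ρ ω)), (𝒢.r_unit _).symm⟩, rfl⟩
  ρ_fibres := by
    intro q q'
    constructor
    · intro h
      have h0 : q.1.1 = q'.1.1 := h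
      have hrr : 𝒢.r q.1.2 = 𝒢.r q'.1.2 := by rw [← q.2, h0, q'.2]
      have hc : 𝒢.s q.1.2 = 𝒢.r (𝒢.mul (𝒢.inv q.1.2) q'.1.2) := by
        rw [𝒢.r_mul _ _ (by rw [𝒢.s_inv]; exact hrr), 𝒢.r_inv]
      refine ⟨𝒢.mul (𝒢.inv q.1.2) q'.1.2, hc, ?_⟩
      apply Subtype.ext
      rw [MTheta_right_act (M := M) PB hPB q _ hc]
      refine Prod.ext h0 ?_
      rw [← 𝒢.mul_assoc q.1.2 (𝒢.inv q.1.2) q'.1.2 (𝒢.r_inv q.1.2).symm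
        (by rw [𝒢.s_inv]; exact hrr), 𝒢.mul_inv, hrr, 𝒢.unit_mul]
    · rintro ⟨γ, hc, heq⟩
      have hval := (MTheta_right_act (M := M) PB hPB q γ hc).symm.trans (congrArg Subtype.val heq)
      have h5 := congrArg Prod.fst hval
      exact h5
  σ_open := h𝒢.2.comp (isOpenMap_pullback_snd hM.ρ_open 𝒢.continuous_r)
  σ_surj := by
    intro xx
    obtain ⟨ω, hω⟩ := hM.ρ_surj xx
    exact ⟨⟨(ω, 𝒢.unit xx), by rw [𝒢.r_unit]; exact hω⟩, 𝒢.s_unit xx⟩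
  σ_fibres := by
    intro q q'
    constructor
    · intro h
      have h0 : 𝒢.s q.1.2 = 𝒢.s q'.1.2 := h
      have hc1 : 𝒢.s q'.1.2 = 𝒢.r (𝒢.inv q.1.2) := by rw [𝒢.r_inv]; exact h0.symm
      refine ⟨⟨(q'.1.1, 𝒢.mul q'.1.2 (𝒢.inv q.1.2), q.1.1),
        by rw [𝒢.r_mul _ _ hc1]; exact q'.2,
        by rw [𝒢.s_mul _ _ hc1, 𝒢.s_inv]; exact q.2.symm⟩, hPB.s_eq _, ?_⟩
      apply Subtype.ext
      erw [MTheta_left_act (M := M) PB hPB _ q rfl]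
      refine Prod.ext rfl ?_
      show 𝒢.mul (𝒢.mul q'.1.2 (𝒢.inv q.1.2)) q.1.2 = q'.1.2
      rw [𝒢.mul_assoc q'.1.2 (𝒢.inv q.1.2) q.1.2 hc1 (𝒢.s_inv q.1.2), 𝒢.inv_mul,
        h0, 𝒢.mul_unit]
    · rintro ⟨t, hc, heq⟩
      have h' : t.1.2.2 = q.1.1 := (hPB.s_eq t).symm.trans hc
      have hval := (MTheta_left_act (M := M) PB hPB t q h').symm.trans (congrArg Subtype.val heq)
      have h2 : 𝒢.mul t.1.2.1 q.1.2 = q'.1.2 := congrArg Prod.snd hval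
      show 𝒢.s q.1.2 = 𝒢.s q'.1.2
      rw [← h2, 𝒢.s_mul _ _ (by rw [t.2.2, h', q.2])]

/-- The fibre product `Graph(ρ) ×_{𝒢⁽⁰⁾} Ω`. -/
def VV := {v : {q : Ω × G // M.left.ρ q.1 = 𝒢.r q.2} × Ω // 𝒢.s v.1.1.2 = M.left.ρ v.2}

instance : TopologicalSpace (VV (M := M)) := instTopologicalSpaceSubtype

/-- The relation defining the composition `Graph(ρ) ×_𝒢 Ω`. -/
def Rel : VV (M := M) → VV (M := M) → Prop := fun q q' =>
  ∃ γ : G, 𝒢.s q.1.1.1.2 = 𝒢.r γ ∧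
    q'.1.1.1.1 = q.1.1.1.1 ∧ q'.1.1.1.2 = 𝒢.mul q.1.1.1.2 γ ∧
    q.1.2 = M.left.act γ q'.1.2

/-- The pair fed to `div` in the composition map. -/
def vd (v : VV (M := M)) : {p : Ω × Ω // M.left.ρ p.1 = M.left.ρ p.2} :=
  ⟨(M.left.act v.1.1.1.2 v.1.2, v.1.1.1.1), by rw [M.left.ρ_act _ _ v.2, v.1.1.2]⟩

/-- The map `Graph(ρ) ×_{𝒢⁽⁰⁾} Ω → Graph(f_Ω)`, `((ω'', γ), ω) ↦ (ω'', ⟨ω'', γ·ω⟩)`. -/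
noncomputable def Phimap (v : VV (M := M)) : {q : Ω × H // M.right.σ q.1 = ℋ.r q.2} :=
  ⟨(v.1.1.1.1, hM.div (vd v)), hM.div_r (vd v)⟩

lemma Phimap_sound (v v' : VV (M := M)) (h : Rel v v') : Phimap hM v = Phimap hM v' := by
  obtain ⟨γ, h1, h2, h3, h4⟩ := h
  have hsρ : 𝒢.s γ = M.left.ρ v'.1.2 := by
    have hv := v'.2
    rw [h3, 𝒢.s_mul _ _ h1] at hv
    exact hv
  apply Subtype.ext
  refine Prod.ext h2.symm ?_
  show hM.div (vd v) = hM.div (vd v')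
  refine hM.div_unique (vd v) (hM.div (vd v')) ?_ ?_
  · show M.right.σ v.1.1.1.1 = ℋ.r (hM.div (vd v'))
    rw [← h2]
    exact hM.div_r (vd v')
  · show M.right.act v.1.1.1.1 (hM.div (vd v')) = M.left.act v.1.1.1.2 v.1.2
    rw [← h2]
    rw [show M.right.act v'.1.1.1.1 (hM.div (vd v')) = M.left.act v'.1.1.1.2 v'.1.2
      from hM.div_act (vd v')]
    rw [h3, M.left.mul_act _ _ _ h1 hsρ, ← h4]

/-- The inverse map `Graph(f_Ω) → Graph(ρ) ×_{𝒢⁽⁰⁾} Ω`. -/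
noncomputable def Psimap (q : {q : Ω × H // M.right.σ q.1 = ℋ.r q.2}) : VV (M := M) :=
  ⟨(⟨(q.1.1, 𝒢.unit (M.left.ρ q.1.1)), (𝒢.r_unit _).symm⟩, M.right.act q.1.1 q.1.2),
    by rw [𝒢.s_unit, M.ρ_actr _ _ q.2]⟩

lemma phimap_psimap (q : {q : Ω × H // M.right.σ q.1 = ℋ.r q.2}) :
    Phimap hM (Psimap (M := M) q) = q := by
  apply Subtype.ext
  refine Prod.ext rfl ?_
  show hM.div (vd (Psimap (M := M) q)) = q.1.2
  refine hM.div_unique _ q.1.2 q.2 ?_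
  show M.right.act q.1.1 q.1.2
    = M.left.act (𝒢.unit (M.left.ρ q.1.1)) (M.right.act q.1.1 q.1.2)
  have hu := M.left.unit_act (M.right.act q.1.1 q.1.2)
  rw [M.ρ_actr _ _ q.2] at hu
  exact hu.symm

lemma psimap_phimap (v : VV (M := M)) :
    Quot.mk (Rel (M := M)) (Psimap (M := M) (Phimap hM v)) = Quot.mk (Rel (M := M)) v := by
  apply Quot.sound
  refine ⟨v.1.1.1.2, ?_, rfl, ?_, ?_⟩
  · show 𝒢.s (𝒢.unit (M.left.ρ v.1.1.1.1)) = 𝒢.r v.1.1.1.2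
    rw [𝒢.s_unit, v.1.1.2]
  · show v.1.1.1.2 = 𝒢.mul (𝒢.unit (M.left.ρ v.1.1.1.1)) v.1.1.1.2
    rw [v.1.1.2, 𝒢.unit_mul]
  · exact hM.div_act (vd v)

lemma continuous_Phimap : Continuous (Phimap hM (M := M)) := by
  have c1 : Continuous fun v : VV (M := M) => v.1.1.1.1 :=
    continuous_fst.comp (continuous_subtype_val.comp
      (continuous_fst.comp continuous_subtype_val))
  have cact : Continuous fun v : VV (M := M) => M.left.act v.1.1.1.2 v.1.2 :=
    M.left.continuousOn_act.comp_continuous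
      ((continuous_snd.comp (continuous_subtype_val.comp
        (continuous_fst.comp continuous_subtype_val))).prodMk
        (continuous_snd.comp continuous_subtype_val))
      (fun v => v.2)
  have cdiv : Continuous fun v : VV (M := M) => hM.div (vd v) := by
    have : (fun v : VV (M := M) => hM.div (vd v)) = hM.div ∘ (fun v => vd v) := rfl
    rw [this]
    exact hM.continuous_div.comp ((cact.prodMk c1).subtype_mk _)
  exact (c1.prodMk cdiv).subtype_mk _

lemma continuous_Psimap : Continuous (Psimap (M := M)) := by
  have c1 : Continuous fun q : {q : Ω × H // M.right.σ q.1 = ℋ.r q.2} => q.1.1 :=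
    continuous_fst.comp continuous_subtype_val
  refine Continuous.subtype_mk ?_ _
  refine Continuous.prodMk ?_ ?_
  · exact (c1.prodMk (𝒢.continuous_unit.comp (M.left.continuous_ρ.comp c1))).subtype_mk _
  · exact M.right.continuousOn_act.comp_continuous
      (c1.prodMk (continuous_snd.comp continuous_subtype_val)) (fun q => q.2)

/-- The composition map on the quotient. -/
noncomputable def Phi : Quot (Rel (M := M)) → {q : Ω × H // M.right.σ q.1 = ℋ.r q.2} :=
  Quot.lift (Phimap hM) (Phimap_sound hM)

/-- The inverse map into the quotient. -/
noncomputable def Psitot (q : {q : Ω × H // M.right.σ q.1 = ℋ.r q.2}) :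
    Quot (Rel (M := M)) :=
  Quot.mk _ (Psimap (M := M) q)

lemma phi_psitot (q : {q : Ω × H // M.right.σ q.1 = ℋ.r q.2}) :
    Phi hM (Psitot (M := M) q) = q := phimap_psimap hM q

lemma psitot_phi (x : Quot (Rel (M := M))) : Psitot (M := M) (Phi hM x) = x :=
  Quot.ind (β := fun x => Psitot (M := M) (Phi hM x) = x)
    (fun v => psimap_phimap hM v) x

lemma continuous_Phi : Continuous (Phi hM (M := M)) :=
  continuous_quot_lift _ (continuous_Phimap hM)

lemma continuous_Psitot : Continuous (Psitot (M := M)) :=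
  continuous_quot_mk.comp (continuous_Psimap (M := M))

lemma s_div_vd (v : VV (M := M)) :
    ℋ.s (hM.div (vd v)) = M.right.σ v.1.2 := by
  have h1 := M.right.σ_act (vd v).1.2 _ (hM.div_r (vd v))
  rw [hM.div_act (vd v)] at h1
  rw [← h1]
  exact M.σ_actl _ _ v.2

/-- The composition bimodule, obtained by transporting `Graph(f_Ω)` along `Φ`/`Ψ`. -/
noncomputable def MQuot : GBimodule PB ℋ (Quot (Rel (M := M))) where
  left :=
  { ρ := fun x => (Phi hM x).1.1
    act := fun t x => Psitot (M := M) ((hM.MGraphF PB hPB).left.act t (Phi hM x))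
    continuous_ρ := (continuous_fst.comp continuous_subtype_val).comp (continuous_Phi hM)
    ρ_act := fun t x h => by
      have h1 := (hM.MGraphF PB hPB).left.ρ_act t (Phi hM x) h
      have h2 : (Phi hM (Psitot (M := M) ((hM.MGraphF PB hPB).left.act t (Phi hM x)))).1.1
          = ((hM.MGraphF PB hPB).left.act t (Phi hM x)).1.1 :=
        congrArg (fun q => q.1.1) (phi_psitot hM _)
      exact h2.trans h1
    unit_act := fun x =>
      ((congrArg (Psitot (M := M)) ((hM.MGraphF PB hPB).left.unit_act (Phi hM x))).trans
        (psitot_phi hM x))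
    mul_act := fun t t' x h1 h2 => by
      have e1 : Phi hM (Psitot (M := M) ((hM.MGraphF PB hPB).left.act t' (Phi hM x)))
          = (hM.MGraphF PB hPB).left.act t' (Phi hM x) := phi_psitot hM _
      have e2 := (hM.MGraphF PB hPB).left.mul_act t t' (Phi hM x) h1 h2
      exact (congrArg (Psitot (M := M)) e2).trans
        (congrArg (fun q => Psitot (M := M) ((hM.MGraphF PB hPB).left.act t q)) e1).symm
    continuousOn_act := by
      have hmain : ContinuousOn
          (fun p : PullbackCarrier 𝒢 M.left.ρ × Quot (Rel (M := M)) =>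
            (hM.MGraphF PB hPB).left.act p.1 (Phi hM p.2))
          {p | PB.s p.1 = (Phi hM p.2).1.1} :=
        (hM.MGraphF PB hPB).left.continuousOn_act.comp
          (Continuous.continuousOn
            (continuous_fst.prodMk ((continuous_Phi hM).comp continuous_snd)))
          (fun p hp => hp)
      exact (continuous_Psitot (M := M)).comp_continuousOn hmain }
  right :=
  { σ := fun x => ℋ.s (Phi hM x).1.2
    act := fun x η => Psitot (M := M) ((hM.MGraphF PB hPB).right.act (Phi hM x) η)
    continuous_σ := ℋ.continuous_s.comp
      ((continuous_snd.comp continuous_subtype_val).comp (continuous_Phi hM))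
    σ_act := fun x η h => by
      have h1 := (hM.MGraphF PB hPB).right.σ_act (Phi hM x) η h
      have h2 : ℋ.s (Phi hM (Psitot (M := M)
            ((hM.MGraphF PB hPB).right.act (Phi hM x) η))).1.2
          = ℋ.s ((hM.MGraphF PB hPB).right.act (Phi hM x) η).1.2 :=
        congrArg (fun q : {q : Ω × H // M.right.σ q.1 = ℋ.r q.2} => ℋ.s q.1.2)
          (phi_psitot hM _)
      exact h2.trans h1
    act_unit := fun x =>
      ((congrArg (Psitot (M := M)) ((hM.MGraphF PB hPB).right.act_unit (Phi hM x))).trans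
        (psitot_phi hM x))
    act_mul := fun x η η' h1 h2 => by
      have e2 := (hM.MGraphF PB hPB).right.act_mul (Phi hM x) η η' h1 h2
      have e1 : Phi hM (Psitot (M := M) ((hM.MGraphF PB hPB).right.act (Phi hM x) η))
          = (hM.MGraphF PB hPB).right.act (Phi hM x) η := phi_psitot hM _
      exact (congrArg (Psitot (M := M)) e2).trans
        (congrArg (fun q => Psitot (M := M) ((hM.MGraphF PB hPB).right.act q η')) e1).symm
    continuousOn_act := by
      have hmain : ContinuousOn
          (fun p : Quot (Rel (M := M)) × H =>
            (hM.MGraphF PB hPB).right.act (Phi hM p.1) p.2)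
          {p | ℋ.s (Phi hM p.1).1.2 = ℋ.r p.2} :=
        (hM.MGraphF PB hPB).right.continuousOn_act.comp
          (Continuous.continuousOn
            (((continuous_Phi hM).comp continuous_fst).prodMk continuous_snd))
          (fun p hp => hp)
      exact (continuous_Psitot (M := M)).comp_continuousOn hmain }
  σ_actl := fun t x h => by
    have h1 := (hM.MGraphF PB hPB).σ_actl t (Phi hM x) h
    have h2 : ℋ.s (Phi hM (Psitot (M := M)
          ((hM.MGraphF PB hPB).left.act t (Phi hM x)))).1.2
        = ℋ.s ((hM.MGraphF PB hPB).left.act t (Phi hM x)).1.2 :=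
      congrArg (fun q : {q : Ω × H // M.right.σ q.1 = ℋ.r q.2} => ℋ.s q.1.2)
        (phi_psitot hM _)
    exact h2.trans h1
  ρ_actr := fun x η h => by
    have h1 := (hM.MGraphF PB hPB).ρ_actr (Phi hM x) η h
    exact (congrArg (fun q => q.1.1) (phi_psitot hM _)).trans h1
  commute := fun t x η h1 h2 => by
    have e1 : Phi hM (Psitot (M := M) ((hM.MGraphF PB hPB).right.act (Phi hM x) η))
        = (hM.MGraphF PB hPB).right.act (Phi hM x) η := phi_psitot hM _
    have e2 : Phi hM (Psitot (M := M) ((hM.MGraphF PB hPB).left.act t (Phi hM x)))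
        = (hM.MGraphF PB hPB).left.act t (Phi hM x) := phi_psitot hM _
    have e3 := (hM.MGraphF PB hPB).commute t (Phi hM x) η h1 h2
    calc Psitot (M := M) ((hM.MGraphF PB hPB).left.act t
            (Phi hM (Psitot (M := M) ((hM.MGraphF PB hPB).right.act (Phi hM x) η))))
        = Psitot (M := M) ((hM.MGraphF PB hPB).left.act t
            ((hM.MGraphF PB hPB).right.act (Phi hM x) η)) := by rw [e1]
      _ = Psitot (M := M) ((hM.MGraphF PB hPB).right.act
            ((hM.MGraphF PB hPB).left.act t (Phi hM x)) η) := by rw [e3]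
      _ = Psitot (M := M) ((hM.MGraphF PB hPB).right.act
            (Phi hM (Psitot (M := M) ((hM.MGraphF PB hPB).left.act t (Phi hM x)))) η) := by
          rw [e2]

/-- The homeomorphism between the quotient and `Graph(f_Ω)`. -/
noncomputable def quotHomeo : Quot (Rel (M := M)) ≃ₜ {q : Ω × H // M.right.σ q.1 = ℋ.r q.2} :=
  { toFun := Phi hM
    invFun := Psitot (M := M)
    left_inv := psitot_phi hM
    right_inv := phi_psitot hM
    continuous_toFun := continuous_Phi hM
    continuous_invFun := continuous_Psitot (M := M) }

lemma MGraphF_lact_Phimap (t : PullbackCarrier 𝒢 M.left.ρ) (v w : VV (M := M))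
    (hc : t.1.2.2 = v.1.1.1.1) (hw1 : w.1.1.1.1 = t.1.1)
    (hw2 : w.1.1.1.2 = 𝒢.mul t.1.2.1 v.1.1.1.2) (hw3 : w.1.2 = v.1.2) :
    (hM.MGraphF PB hPB).left.act t (Phimap hM v) = Phimap hM w := by
  have hsr : ℋ.s (hM.fmap t) = ℋ.r (hM.div (vd v)) := by
    rw [hM.fmap_s, hc]
    exact hM.div_r (vd v)
  have hv := MGraphF_left_act hM PB hPB t (Phimap hM v) hc
  apply Subtype.ext
  rw [hv]
  refine Prod.ext hw1.symm ?_
  have c1 : M.right.σ (vd w).1.2 = ℋ.r (ℋ.mul (hM.fmap t) (hM.div (vd v))) := by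
    show M.right.σ w.1.1.1.1 = _
    rw [hw1, ℋ.r_mul _ _ hsr]
    exact hM.fmap_sigma_r t
  have c2 : M.right.act (vd w).1.2 (ℋ.mul (hM.fmap t) (hM.div (vd v))) = (vd w).1.1 := by
    show M.right.act w.1.1.1.1 _ = M.left.act w.1.1.1.2 w.1.2
    rw [hw1, hw2, hw3]
    have hsρ : 𝒢.s t.1.2.1 = M.left.ρ v.1.1.1.1 := by rw [t.2.2, hc]
    have hγγ : 𝒢.s t.1.2.1 = 𝒢.r v.1.1.1.2 := by rw [t.2.2, hc, v.1.1.2]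
    rw [M.right.act_mul t.1.1 _ _ (hM.fmap_sigma_r t) hsr]
    rw [show M.right.act t.1.1 (hM.fmap t) = M.left.act t.1.2.1 t.1.2.2 from hM.fmap_act t]
    rw [hc]
    rw [← M.commute t.1.2.1 v.1.1.1.1 (hM.div (vd v)) hsρ (hM.div_r (vd v))]
    rw [show M.right.act v.1.1.1.1 (hM.div (vd v)) = M.left.act v.1.1.1.2 v.1.2
      from hM.div_act (vd v)]
    rw [← M.left.mul_act t.1.2.1 v.1.1.1.2 v.1.2 hγγ v.2]
  exact (hM.div_unique (vd w) _ c1 c2).symm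

lemma MGraphF_ract_Phimap (v w : VV (M := M)) (η : H)
    (hη : M.right.σ v.1.2 = ℋ.r η) (hw1 : w.1.1 = v.1.1)
    (hw3 : w.1.2 = M.right.act v.1.2 η) :
    (hM.MGraphF PB hPB).right.act (Phimap hM v) η = Phimap hM w := by
  have hw11 : w.1.1.1.1 = v.1.1.1.1 := congrArg (fun z => z.1.1) hw1
  have hw12 : w.1.1.1.2 = v.1.1.1.2 := congrArg (fun z => z.1.2) hw1
  have hsd : ℋ.s (hM.div (vd v)) = ℋ.r η := (s_div_vd hM v).trans hη
  have hv := MGraphF_right_act hM PB hPB (Phimap hM v) η hsd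
  apply Subtype.ext
  rw [hv]
  refine Prod.ext hw11.symm ?_
  have c1 : M.right.σ (vd w).1.2 = ℋ.r (ℋ.mul (hM.div (vd v)) η) := by
    show M.right.σ w.1.1.1.1 = _
    rw [hw11, ℋ.r_mul _ _ hsd]
    exact hM.div_r (vd v)
  have c2 : M.right.act (vd w).1.2 (ℋ.mul (hM.div (vd v)) η) = (vd w).1.1 := by
    show M.right.act w.1.1.1.1 _ = M.left.act w.1.1.1.2 w.1.2
    rw [hw11, hw12, hw3]
    rw [M.right.act_mul v.1.1.1.1 _ _ (hM.div_r (vd v)) hsd]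
    rw [show M.right.act v.1.1.1.1 (hM.div (vd v)) = M.left.act v.1.1.1.2 v.1.2
      from hM.div_act (vd v)]
    exact (M.commute v.1.1.1.2 v.1.2 η v.2 hη).symm
  exact (hM.div_unique (vd w) _ c1 c2).symm

end Acc

end IsGraph

end Auxiliary

/-! ## Statement 3: every generalised morphism is the composition of (the inverse of) an
equivalence and a strict morphism: `[Ω] ∘ Morph(ρ) = Morph(f_Ω)` -/

section Statement3

/-- An isomorphism of `𝒢`-`ℋ`-bimodules: an equivariant homeomorphism intertwining the
anchor maps.  Equality of the corresponding generalised morphisms means exactly that such an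
isomorphism exists. -/
structure GBimoduleIso {G : Type u} {O : Type v} {H : Type w} {P : Type x}
    [TopologicalSpace G] [TopologicalSpace O] [TopologicalSpace H] [TopologicalSpace P]
    {𝒢 : TopGroupoid G O} {ℋ : TopGroupoid H P}
    {Ω₁ : Type y} [TopologicalSpace Ω₁] {Ω₂ : Type z} [TopologicalSpace Ω₂]
    (M₁ : GBimodule 𝒢 ℋ Ω₁) (M₂ : GBimodule 𝒢 ℋ Ω₂) where
  e : Ω₁ ≃ₜ Ω₂
  map_ρ : ∀ ω, M₂.left.ρ (e ω) = M₁.left.ρ ω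
  map_σ : ∀ ω, M₂.right.σ (e ω) = M₁.right.σ ω
  map_actl : ∀ γ ω, 𝒢.s γ = M₁.left.ρ ω → e (M₁.left.act γ ω) = M₂.left.act γ (e ω)
  map_actr : ∀ ω η, M₁.right.σ ω = ℋ.r η → e (M₁.right.act ω η) = M₂.right.act (e ω) η

variable {G : Type u} {O : Type v} {H : Type w} {P : Type x} {Ω : Type v}
variable [TopologicalSpace G] [TopologicalSpace O] [TopologicalSpace H] [TopologicalSpace P]
variable [TopologicalSpace Ω]

/-- **Factorisation of generalised morphisms.**  Let `Ω` be a graph from `𝒢` to `ℋ` with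
anchor maps `ρ` and `σ`.  Then `f_Ω : ρ*(𝒢) → ℋ`, `(ω',γ,ω) ↦ ⟨ω', γω⟩_ℋ`, is a strict
morphism of topological groupoids extending `σ`, the graph `Graph(ρ)` of the canonical strict
morphism `ρ*(𝒢) → 𝒢` is an equivalence, and the composition `Graph(ρ) ×_𝒢 Ω` is isomorphic,
as a `ρ*(𝒢)`-`ℋ`-bimodule, to `Graph(f_Ω)`; that is, `[Ω] ∘ Morph(ρ) = Morph(f_Ω)` as
generalised morphisms from `ρ*(𝒢)` to `ℋ`. -/
theorem generalised_morphism_factorisation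
    [LocallyCompactSpace G] [T2Space G] [LocallyCompactSpace O] [T2Space O]
    [LocallyCompactSpace H] [T2Space H] [LocallyCompactSpace P] [T2Space P]
    [LocallyCompactSpace Ω] [T2Space Ω]
    (𝒢 : TopGroupoid G O) (ℋ : TopGroupoid H P)
    (h𝒢 : 𝒢.OpenMaps) (hℋ : ℋ.OpenMaps)
    (M : GBimodule 𝒢 ℋ Ω) (hM : IsGraph M)
    (PB : TopGroupoid (PullbackCarrier 𝒢 M.left.ρ) Ω)
    (hPB : IsPullbackGroupoid 𝒢 M.left.ρ PB) :
    ∃ f : StrictMorphism PB ℋ,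
      -- `f_Ω` extends `σ : Ω = (ρ*(𝒢))⁽⁰⁾ → ℋ⁽⁰⁾`
      f.obj = M.right.σ ∧
      -- `f_Ω (ω',γ,ω) = ⟨ω', γω⟩_ℋ`, the unique `η` with `ω'·η = γ·ω`
      (∀ (t : PullbackCarrier 𝒢 M.left.ρ) (η : H),
        M.right.σ t.1.1 = ℋ.r η →
        M.right.act t.1.1 η = M.left.act t.1.2.1 t.1.2.2 →
        f.toFun t = η) ∧
      -- `Graph(ρ)` from `ρ*(𝒢)` to `𝒢`:
      (∃ MΘ : GBimodule PB 𝒢 {q : Ω × G // M.left.ρ q.1 = 𝒢.r q.2},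
        (∀ q, MΘ.left.ρ q = q.1.1) ∧
        (∀ q, MΘ.right.σ q = 𝒢.s q.1.2) ∧
        (∀ t q, t.1.2.2 = q.1.1 →
          (MΘ.left.act t q).1 = (t.1.1, 𝒢.mul t.1.2.1 q.1.2)) ∧
        (∀ q γ, 𝒢.s q.1.2 = 𝒢.r γ → (MΘ.right.act q γ).1 = (q.1.1, 𝒢.mul q.1.2 γ)) ∧
        -- `Graph(ρ)` is an equivalence
        IsEquivalence MΘ ∧
        -- the composition `Graph(ρ) ×_𝒢 Ω`, i.e. the quotient of
        -- `Graph(ρ) ×_{𝒢⁽⁰⁾} Ω` by the diagonal `𝒢`-action: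
        (∃ MQ : GBimodule PB ℋ (Quot (fun
              (q q' : {v : {q : Ω × G // M.left.ρ q.1 = 𝒢.r q.2} × Ω //
                        𝒢.s v.1.1.2 = M.left.ρ v.2}) =>
              ∃ γ : G, 𝒢.s q.1.1.1.2 = 𝒢.r γ ∧
                q'.1.1.1.1 = q.1.1.1.1 ∧ q'.1.1.1.2 = 𝒢.mul q.1.1.1.2 γ ∧
                q.1.2 = M.left.act γ q'.1.2)),
          -- the bimodule structure on the quotient is induced by the quotient map
          (∀ v, MQ.left.ρ (Quot.mk _ v) = v.1.1.1.1) ∧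
          (∀ v, MQ.right.σ (Quot.mk _ v) = M.right.σ v.1.2) ∧
          (∀ t v (hc : t.1.2.2 = v.1.1.1.1),
            MQ.left.act t (Quot.mk _ v)
              = Quot.mk _ ⟨(⟨(t.1.1, 𝒢.mul t.1.2.1 v.1.1.1.2),
                  t.2.1.trans (𝒢.r_mul t.1.2.1 v.1.1.1.2
                    (t.2.2.trans ((congrArg M.left.ρ hc).trans v.1.1.2))).symm⟩, v.1.2),
                  (𝒢.s_mul t.1.2.1 v.1.1.1.2
                    (t.2.2.trans ((congrArg M.left.ρ hc).trans v.1.1.2))).trans v.2⟩) ∧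
          (∀ v η (hη : M.right.σ v.1.2 = ℋ.r η),
            MQ.right.act (Quot.mk _ v) η
              = Quot.mk _ ⟨(v.1.1, M.right.act v.1.2 η),
                  v.2.trans (M.ρ_actr v.1.2 η hη).symm⟩) ∧
          -- `Graph(f_Ω)` with its canonical bimodule structure:
          (∃ MF : GBimodule PB ℋ {q : Ω × H // M.right.σ q.1 = ℋ.r q.2},
            (∀ q, MF.left.ρ q = q.1.1) ∧
            (∀ q, MF.right.σ q = ℋ.s q.1.2) ∧
            (∀ t q, t.1.2.2 = q.1.1 →
              (MF.left.act t q).1 = (t.1.1, ℋ.mul (f.toFun t) q.1.2)) ∧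
            (∀ q η, ℋ.s q.1.2 = ℋ.r η → (MF.right.act q η).1 = (q.1.1, ℋ.mul q.1.2 η)) ∧
            -- ... and the composition is isomorphic to `Graph(f_Ω)`.
            Nonempty (GBimoduleIso MQ MF)))) := by
  refine ⟨hM.fOmega PB hPB, rfl, fun t η h1 h2 => hM.fmap_unique t η h1 h2,
    IsGraph.MTheta M PB hPB, fun q => rfl, fun q => rfl,
    fun t q h => IsGraph.MTheta_left_act PB hPB t q h,
    fun q γ h => IsGraph.MTheta_right_act PB hPB q γ h,
    IsGraph.isEquivalence_MTheta hM PB hPB h𝒢,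
    IsGraph.MQuot hM PB hPB, fun v => rfl, fun v => IsGraph.s_div_vd hM v, ?_, ?_,
    hM.MGraphF PB hPB, fun q => rfl, fun q => rfl,
    fun t q h => IsGraph.MGraphF_left_act hM PB hPB t q h,
    fun q η h => IsGraph.MGraphF_right_act hM PB hPB q η h,
    ⟨{ e := IsGraph.quotHomeo hM
       map_ρ := fun ω => rfl
       map_σ := fun ω => rfl
       map_actl := fun γ ω _ => IsGraph.phi_psitot hM _
       map_actr := fun ω η _ => IsGraph.phi_psitot hM _ }⟩⟩
  · intro t v hc
    refine Eq.trans (congrArg (IsGraph.Psitot (M := M)) ?_) (IsGraph.psimap_phimap hM _)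
    refine IsGraph.MGraphF_lact_Phimap hM PB hPB t v _ hc ?_ ?_ ?_ <;> rfl
  · intro v η hη
    refine Eq.trans (congrArg (IsGraph.Psitot (M := M)) ?_) (IsGraph.psimap_phimap hM _)
    refine IsGraph.MGraphF_ract_Phimap hM PB hPB v _ η hη ?_ ?_ <;> rfl

end Statement3
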